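/- Let u : [0,T] → [0,∞) be continuous with u(t) ≤ a + b∫_0^t u(s) ds + c∫_0^t √(u(s)) ds for all t, where a, b, c ≥ 0. Then u(t) ≤ ( (√a + (c/2)t) e^{(b/2)t} )² ≤ (√a + (c/2)T)² e^{bT} for all t ∈ [0,T]. -/
import Mathlib

open MeasureTheory

private lemma sqrt_bound (T a b c : ℝ) (hT : 0 < T) (ha : 0 < a) (hb : 0 ≤ b)
    (hc : 0 ≤ c) (u : ℝ → ℝ)
    (hcont : ContinuousOn u (Set.Icc 0 T))
    (hnn : ∀ t ∈ Set.Icc (0 : ℝ) T, 0 ≤ u t)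
    (hineq : ∀ t ∈ Set.Icc (0 : ℝ) T,
      u t ≤ a + b * (∫ s in (0 : ℝ)..t, u s) +
        c * ∫ s in (0 : ℝ)..t, Real.sqrt (u s)) :
    ∀ t ∈ Set.Icc (0 : ℝ) T,
      u t ≤ ((Real.sqrt a + c / 2 * t) * Real.exp (b / 2 * t)) ^ 2 := by
  have hIcc : Set.uIcc (0 : ℝ) T = Set.Icc 0 T := Set.uIcc_of_le hT.le
  have hscont : ContinuousOn (fun s => Real.sqrt (u s)) (Set.Icc 0 T) :=
    Real.continuous_sqrt.comp_continuousOn hcont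
  have hintu : ∀ t ∈ Set.Icc (0 : ℝ) T, IntervalIntegrable u volume 0 t := by
    intro t ht
    apply (hcont.mono ?_).intervalIntegrable
    rw [Set.uIcc_of_le ht.1]
    exact Set.Icc_subset_Icc le_rfl ht.2
  have hints : ∀ t ∈ Set.Icc (0 : ℝ) T,
      IntervalIntegrable (fun s => Real.sqrt (u s)) volume 0 t := by
    intro t ht
    apply (hscont.mono ?_).intervalIntegrable
    rw [Set.uIcc_of_le ht.1]
    exact Set.Icc_subset_Icc le_rfl ht.2
  set V : ℝ → ℝ := fun t => a + b * (∫ s in (0 : ℝ)..t, u s) +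
      c * ∫ s in (0 : ℝ)..t, Real.sqrt (u s) with hV
  have hVc : ContinuousOn V (Set.Icc 0 T) := by
    apply (continuousOn_const.add (continuousOn_const.mul ?_)).add
      (continuousOn_const.mul ?_)
    · have := intervalIntegral.continuousOn_primitive_interval'
        (μ := volume) (hintu T (Set.right_mem_Icc.2 hT.le)) (by rw [hIcc]; exact Set.left_mem_Icc.2 hT.le)
      rwa [hIcc] at this
    · have := intervalIntegral.continuousOn_primitive_interval'
        (μ := volume) (hints T (Set.right_mem_Icc.2 hT.le)) (by rw [hIcc]; exact Set.left_mem_Icc.2 hT.le)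
      rwa [hIcc] at this
  have hVpos : ∀ t ∈ Set.Icc (0 : ℝ) T, a ≤ V t := by
    intro t ht
    have h1 : 0 ≤ ∫ s in (0 : ℝ)..t, u s :=
      intervalIntegral.integral_nonneg ht.1 fun s hs =>
        hnn s ⟨hs.1, hs.2.trans ht.2⟩
    have h2 : 0 ≤ ∫ s in (0 : ℝ)..t, Real.sqrt (u s) :=
      intervalIntegral.integral_nonneg ht.1 fun s hs => Real.sqrt_nonneg _
    simp only [hV]
    nlinarith
  have huV : ∀ t ∈ Set.Icc (0 : ℝ) T, u t ≤ V t := fun t ht => hineq t ht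
  have hVd : ∀ x ∈ Set.Ioo (0 : ℝ) T,
      HasDerivAt V (b * u x + c * Real.sqrt (u x)) x := by
    intro x hx
    have hmem : Set.Icc (0 : ℝ) T ∈ nhds x := Icc_mem_nhds hx.1 hx.2
    have hI1 : HasDerivAt (fun t => ∫ s in (0 : ℝ)..t, u s) (u x) x :=
      intervalIntegral.integral_hasDerivAt_right (hintu x (Set.Ioo_subset_Icc_self hx))
        ((hcont.mono Set.Ioo_subset_Icc_self).stronglyMeasurableAtFilter isOpen_Ioo x hx)
        (hcont.continuousAt hmem)
    have hI2 : HasDerivAt (fun t => ∫ s in (0 : ℝ)..t, Real.sqrt (u s))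
        (Real.sqrt (u x)) x :=
      intervalIntegral.integral_hasDerivAt_right (hints x (Set.Ioo_subset_Icc_self hx))
        ((hscont.mono Set.Ioo_subset_Icc_self).stronglyMeasurableAtFilter isOpen_Ioo x hx)
        (hscont.continuousAt hmem)
    exact ((hI1.const_mul b).const_add a).add (hI2.const_mul c)
  -- the auxiliary function
  set g : ℝ → ℝ := fun t => Real.sqrt a + c / 2 * t -
      Real.sqrt (V t) * Real.exp (-(b / 2) * t) with hg
  have hgc : ContinuousOn g (Set.Icc 0 T) := by
    apply (continuousOn_const.add (continuousOn_const.mul continuousOn_id)).sub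
    exact (Real.continuous_sqrt.comp_continuousOn hVc).mul
      (Real.continuous_exp.comp (continuous_const.mul continuous_id)).continuousOn
  have hgd : ∀ x ∈ interior (Set.Icc (0:ℝ) T),
      HasDerivWithinAt g
        (c / 2 - ((b * u x + c * Real.sqrt (u x)) / (2 * Real.sqrt (V x)) *
            Real.exp (-(b / 2) * x) +
          Real.sqrt (V x) * (Real.exp (-(b / 2) * x) * (-(b / 2)))))
        (interior (Set.Icc (0:ℝ) T)) x := by
    rw [interior_Icc]
    intro x hx
    have hVx : (0:ℝ) < V x := lt_of_lt_of_le ha (hVpos x (Set.Ioo_subset_Icc_self hx))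
    have hs : HasDerivAt (fun t => Real.sqrt (V t))
        ((b * u x + c * Real.sqrt (u x)) / (2 * Real.sqrt (V x))) x :=
      (hVd x hx).sqrt hVx.ne'
    have he : HasDerivAt (fun t => Real.exp (-(b / 2) * t))
        (Real.exp (-(b / 2) * x) * (-(b / 2))) x := by
      simpa using (((hasDerivAt_id x).const_mul (-(b / 2))).exp)
    have : HasDerivAt g
        (c / 2 - ((b * u x + c * Real.sqrt (u x)) / (2 * Real.sqrt (V x)) *
            Real.exp (-(b / 2) * x) +
          Real.sqrt (V x) * (Real.exp (-(b / 2) * x) * (-(b / 2))))) x := by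
      have h1 : HasDerivAt (fun t => Real.sqrt a + c / 2 * t) (c / 2) x := by
        simpa using ((hasDerivAt_id x).const_mul (c / 2)).const_add (Real.sqrt a)
      exact h1.sub (hs.mul he)
    exact this.hasDerivWithinAt
  have hgmono : MonotoneOn g (Set.Icc 0 T) := by
    apply monotoneOn_of_hasDerivWithinAt_nonneg (convex_Icc 0 T) hgc hgd
    rw [interior_Icc]
    intro x hx
    have hxIcc := Set.Ioo_subset_Icc_self hx
    have hVx : (0:ℝ) < V x := lt_of_lt_of_le ha (hVpos x hxIcc)
    have hsV : (0:ℝ) < Real.sqrt (V x) := Real.sqrt_pos.2 hVx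
    have hux : u x ≤ V x := huV x hxIcc
    have hsu : Real.sqrt (u x) ≤ Real.sqrt (V x) := Real.sqrt_le_sqrt hux
    -- derivative bound
    have hexp : Real.exp (-(b / 2) * x) ≤ 1 := by
      rw [Real.exp_le_one_iff]
      nlinarith [hx.1, hb]
    have hexp0 : (0:ℝ) < Real.exp (-(b / 2) * x) := Real.exp_pos _
    set E := Real.exp (-(b / 2) * x)
    set B := (b * u x + c * Real.sqrt (u x)) / (2 * Real.sqrt (V x)) - b / 2 * Real.sqrt (V x)
    have key : (b * u x + c * Real.sqrt (u x)) / (2 * Real.sqrt (V x)) *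
        E + Real.sqrt (V x) * (E * (-(b / 2))) = E * B := by ring
    rw [sub_nonneg, key]
    have hB : B ≤ c / 2 := by
      have hVsq : Real.sqrt (V x) * Real.sqrt (V x) = V x := Real.mul_self_sqrt hVx.le
      have hnum : b * u x + c * Real.sqrt (u x) ≤ b * V x + c * Real.sqrt (V x) := by
        nlinarith
      have : (b * u x + c * Real.sqrt (u x)) / (2 * Real.sqrt (V x)) ≤
          (b * V x + c * Real.sqrt (V x)) / (2 * Real.sqrt (V x)) :=
        div_le_div_of_nonneg_right hnum (by positivity) |>.trans_eq rfl
      have h2 : (b * V x + c * Real.sqrt (V x)) / (2 * Real.sqrt (V x)) =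
          b / 2 * Real.sqrt (V x) + c / 2 := by
        field_simp
        nlinarith
      simp only [B]
      linarith [this, h2.le, h2.ge]
    rcases le_or_gt B 0 with hB0 | hB0
    · nlinarith
    · calc E * B ≤ 1 * B := by nlinarith
        _ ≤ c / 2 := by linarith
  -- conclude
  intro t ht
  have h0 : g 0 ≤ g t := hgmono (Set.left_mem_Icc.2 hT.le) ht ht.1
  have hV0 : V 0 = a := by simp [hV]
  have hg0 : g 0 = 0 := by
    simp [hg, hV0]
  rw [hg0] at h0
  have hVt : Real.sqrt (V t) * Real.exp (-(b / 2) * t) ≤ Real.sqrt a + c / 2 * t := by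
    simp only [hg] at h0; linarith
  have hVt' : Real.sqrt (V t) ≤ (Real.sqrt a + c / 2 * t) * Real.exp (b / 2 * t) := by
    have hE : Real.exp (-(b / 2) * t) * Real.exp (b / 2 * t) = 1 := by
      rw [← Real.exp_add]; ring_nf; exact Real.exp_zero
    have hEp : (0:ℝ) < Real.exp (b / 2 * t) := Real.exp_pos _
    nlinarith [Real.sqrt_nonneg (V t)]
  have hfin : u t ≤ V t := huV t ht
  have : V t = Real.sqrt (V t) ^ 2 := by
    rw [Real.sq_sqrt (le_trans ha.le (hVpos t ht))]
  rw [this] at hfin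
  calc u t ≤ Real.sqrt (V t) ^ 2 := hfin
    _ ≤ ((Real.sqrt a + c / 2 * t) * Real.exp (b / 2 * t)) ^ 2 := by
        apply pow_le_pow_left₀ (Real.sqrt_nonneg _) hVt'

theorem stmt16 (T a b c : ℝ) (hT : 0 < T) (ha : 0 ≤ a) (hb : 0 ≤ b)
    (hc : 0 ≤ c) (u : ℝ → ℝ)
    (hcont : ContinuousOn u (Set.Icc 0 T))
    (hnn : ∀ t ∈ Set.Icc (0 : ℝ) T, 0 ≤ u t)
    (hineq : ∀ t ∈ Set.Icc (0 : ℝ) T,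
      u t ≤ a + b * (∫ s in (0 : ℝ)..t, u s) +
        c * ∫ s in (0 : ℝ)..t, Real.sqrt (u s)) :
    ∀ t ∈ Set.Icc (0 : ℝ) T,
      u t ≤ ((Real.sqrt a + c / 2 * t) * Real.exp (b / 2 * t)) ^ 2 ∧
      ((Real.sqrt a + c / 2 * t) * Real.exp (b / 2 * t)) ^ 2 ≤
        (Real.sqrt a + c / 2 * T) ^ 2 * Real.exp (b * T) := by
  intro t ht
  constructor
  · -- perturbation argument
    have hEps : ∀ ε > (0:ℝ), u t ≤
        ((Real.sqrt (a + ε) + c / 2 * t) * Real.exp (b / 2 * t)) ^ 2 := by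
      intro ε hε
      have hineq' : ∀ s ∈ Set.Icc (0 : ℝ) T,
          u s ≤ (a + ε) + b * (∫ r in (0 : ℝ)..s, u r) +
            c * ∫ r in (0 : ℝ)..s, Real.sqrt (u r) := by
        intro s hs
        have := hineq s hs
        linarith
      exact sqrt_bound T (a + ε) b c hT (by linarith) hb hc u hcont hnn hineq' t ht
    have hTen : Filter.Tendsto
        (fun ε => ((Real.sqrt (a + ε) + c / 2 * t) * Real.exp (b / 2 * t)) ^ 2)
        (nhdsWithin 0 (Set.Ioi 0))
        (nhds (((Real.sqrt a + c / 2 * t) * Real.exp (b / 2 * t)) ^ 2)) := by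
      have : Filter.Tendsto
          (fun ε : ℝ => ((Real.sqrt (a + ε) + c / 2 * t) * Real.exp (b / 2 * t)) ^ 2)
          (nhds 0)
          (nhds (((Real.sqrt (a + 0) + c / 2 * t) * Real.exp (b / 2 * t)) ^ 2)) := by
        apply Filter.Tendsto.pow
        apply Filter.Tendsto.mul_const
        apply Filter.Tendsto.add_const
        exact (Real.continuous_sqrt.tendsto _).comp (tendsto_const_nhds.add Filter.tendsto_id)
      rw [add_zero] at this
      exact this.mono_left nhdsWithin_le_nhds
    exact ge_of_tendsto hTen (eventually_nhdsWithin_of_forall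
      (fun ε hε => hEps ε hε))
  · -- monotonicity bound
    have hnn1 : 0 ≤ Real.sqrt a + c / 2 * t := by
      have := Real.sqrt_nonneg a
      nlinarith [ht.1]
    have h1 : (Real.sqrt a + c / 2 * t) ^ 2 ≤ (Real.sqrt a + c / 2 * T) ^ 2 := by
      apply pow_le_pow_left₀ hnn1
      nlinarith [ht.2]
    have h2 : Real.exp (b / 2 * t) ^ 2 = Real.exp (b * t) := by
      rw [sq, ← Real.exp_add]; ring_nf
    calc ((Real.sqrt a + c / 2 * t) * Real.exp (b / 2 * t)) ^ 2
        = (Real.sqrt a + c / 2 * t) ^ 2 * Real.exp (b * t) := by rw [mul_pow, h2]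
      _ ≤ (Real.sqrt a + c / 2 * T) ^ 2 * Real.exp (b * T) := by
          apply mul_le_mul h1 (Real.exp_le_exp.2 (by nlinarith [ht.2])) (Real.exp_pos _).le
            (by positivity)
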